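/- Let H = (X,E) be an r-uniform hypergraph with n nodes (r ≥ 1) and suppose H has a no-rainbow r-coloring c*. Then there exist an r-coloring c of H and a set F ⊆ X with |F| = r such that: the nodes of F receive r pairwise distinct colors under c, all nodes in X \ F receive the same color under c, c agrees with c* on F, and the Hamming distance satisfies d(c, c*) ≤ (r−1)·n/r. -/

import Mathlib

/-- A hyperedge `e` is a rainbow edge with respect to the `r`-coloring `c`
if all `r` colors appear among the nodes of `e`. -/
def IsRainbowEdge {V : Type*} {r : ℕ} (e : Finset V) (c : V → Fin r) : Prop :=
  ∀ i : Fin r, ∃ v ∈ e, c v = i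

/-- A no-rainbow `r`-coloring of the hypergraph with edge set `E` is a surjective
`r`-coloring with respect to which no hyperedge is a rainbow edge. -/
def IsNoRainbowColoring {V : Type*} {r : ℕ} (E : Finset (Finset V)) (c : V → Fin r) : Prop :=
  Function.Surjective c ∧ ∀ e ∈ E, ¬ IsRainbowEdge e c

/-- If an `r`-uniform hypergraph `H = (X, E)` with `n` nodes (`r ≥ 1`)
has a no-rainbow `r`-coloring `c*`, then there exist an `r`-coloring `c` and a set
`F ⊆ X` with `|F| = r` such that the nodes of `F` receive pairwise distinct colors
under `c`, all nodes outside `F` receive the same color under `c`, `c` agrees with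
`c*` on `F`, and the Hamming distance satisfies `d(c, c*) ≤ (r-1)·n/r`. -/
theorem initial_candidate_pair_exists
    {V : Type*} [Fintype V] [DecidableEq V] {r n : ℕ} (hr : 1 ≤ r)
    (E : Finset (Finset V)) (hn : Fintype.card V = n)
    (huniform : ∀ e ∈ E, e.card = r)
    (cstar : V → Fin r) (hstar : IsNoRainbowColoring E cstar) :
    ∃ (c : V → Fin r) (F : Finset V),
      F.card = r ∧
      (∀ u ∈ F, ∀ v ∈ F, u ≠ v → c u ≠ c v) ∧
      (∀ u ∉ F, ∀ v ∉ F, c u = c v) ∧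
      (∀ v ∈ F, c v = cstar v) ∧
      (hammingDist c cstar : ℝ) ≤ (r - 1) * n / r := by
  classical
  obtain ⟨hsurj, -⟩ := hstar
  set g := Function.surjInv hsurj with hg
  have hginv : ∀ i, cstar (g i) = i := Function.surjInv_eq hsurj
  have hginj : Function.Injective g := by
    intro a b hab
    have := congrArg cstar hab
    rwa [hginv, hginv] at this
  set F : Finset V := Finset.univ.image g with hF
  have hcardF : F.card = r := by
    rw [hF, Finset.card_image_of_injective _ hginj, Finset.card_univ, Fintype.card_fin]
  have hfin : (Finset.univ : Finset (Fin r)).Nonempty := ⟨⟨0, hr⟩, Finset.mem_univ _⟩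
  obtain ⟨i₀, -, hmax⟩ := Finset.exists_max_image Finset.univ
    (fun i => (Finset.univ.filter fun v => cstar v = i).card) hfin
  set m := (Finset.univ.filter fun v => cstar v = i₀).card with hm
  have hsum : ∑ i : Fin r, (Finset.univ.filter fun v => cstar v = i).card = n := by
    rw [← hn, ← Finset.card_univ]
    exact (Finset.card_eq_sum_card_fiberwise (by intro x _; exact Finset.mem_univ _)).symm
  have hnm : n ≤ r * m := by
    calc n = ∑ i : Fin r, (Finset.univ.filter fun v => cstar v = i).card := hsum.symm
    _ ≤ ∑ _i : Fin r, m := Finset.sum_le_sum (fun i _ => hmax i (Finset.mem_univ i))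
    _ = r * m := by simp [Finset.sum_const, mul_comm]
  refine ⟨fun v => if v ∈ F then cstar v else i₀, F, hcardF, ?_, ?_, ?_, ?_⟩
  · intro u hu v hv huv
    simp only [if_pos hu, if_pos hv]
    rw [hF, Finset.mem_image] at hu hv
    obtain ⟨a, -, rfl⟩ := hu
    obtain ⟨b, -, rfl⟩ := hv
    rw [hginv, hginv]
    exact fun h => huv (congrArg g h)
  · intro u hu v hv; simp [if_neg hu, if_neg hv]
  · intro v hv; simp [if_pos hv]
  · have hsub : (Finset.univ.filter fun v => (if v ∈ F then cstar v else i₀) ≠ cstar v) ⊆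
        (Finset.univ.filter fun v => cstar v ≠ i₀) := by
      intro v hv
      simp only [Finset.mem_filter, Finset.mem_univ, true_and] at hv ⊢
      intro h
      apply hv
      by_cases hvF : v ∈ F <;> simp [hvF, h]
    have hcard1 : hammingDist (fun v => if v ∈ F then cstar v else i₀) cstar ≤
        (Finset.univ.filter fun v => cstar v ≠ i₀).card := Finset.card_le_card hsub
    have hcard2 : (Finset.univ.filter fun v => cstar v ≠ i₀).card = n - m := by
      have h := Finset.card_filter_add_card_filter_not
        (s := (Finset.univ : Finset V)) (p := fun v => cstar v = i₀)
      rw [Finset.card_univ, hn] at h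
      simp only [ne_eq] at h ⊢
      omega
    have hrpos : (0 : ℝ) < r := by exact_mod_cast hr
    have hmn : m ≤ n := by
      rw [hm, ← hn, ← Finset.card_univ]; exact Finset.card_filter_le _ _
    calc (hammingDist (fun v => if v ∈ F then cstar v else i₀) cstar : ℝ)
        ≤ ((n - m : ℕ) : ℝ) := by exact_mod_cast hcard1.trans_eq hcard2
      _ = (n : ℝ) - m := by push_cast [hmn]; ring
      _ ≤ (n : ℝ) - n / r := by
          have hdm : (n : ℝ) / r ≤ m := by
            rw [div_le_iff₀ hrpos]
            have : (n : ℝ) ≤ r * m := by exact_mod_cast hnm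
            linarith
          linarith
      _ = (r - 1) * n / r := by field_simp
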